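/- In the classical Cholesky factorization of a sparse symmetric positive definite matrix A viewed via its graph G, entry (i,j) with j < i is nonzero in the Cholesky factor if and only if there exists a path from i to j in G whose intermediate vertices all have labels smaller than min(i,j) = j (the Rose–Tarjan fill path theorem). In particular, vertex i depends on vertex j (j < i) in the elimination iff there is a path i → p_1 → ... → p_t → j with all p_s < i. -/

import Mathlib

open Matrix Finset

/-- The vector `b_{ij} = e_i - e_j` in `ℝ^N`. -/
noncomputable def stdb {N : ℕ} (i j : Fin N) : Fin N → ℝ :=
  fun k => (if k = i then (1 : ℝ) else 0) - (if k = j then (1 : ℝ) else 0)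

/-- The graph Laplacian `L = ∑_{i<j} w_{ij} b_{ij} b_{ij}ᵀ` of the weighted graph with
weight `w i j` on the (undirected) edge `{i,j}` (`w i j = 0` meaning no edge). -/
noncomputable def lap {N : ℕ} (w : Fin N → Fin N → ℝ) : Matrix (Fin N) (Fin N) ℝ :=
  ∑ p : Fin N × Fin N,
    if p.1 < p.2 then w p.1 p.2 • Matrix.vecMulVec (stdb p.1 p.2) (stdb p.1 p.2) else 0

/-- One step of graph elimination: eliminating vertex `k` deletes `k` (and incident
edges) and connects every pair of distinct remaining neighbors of `k`. -/
def elimStep {N : ℕ} (A : Fin N → Fin N → Prop) (k : Fin N) : Fin N → Fin N → Prop :=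
  fun u v => u ≠ k ∧ v ≠ k ∧ (A u v ∨ (u ≠ v ∧ A u k ∧ A k v))

/-- `filled A m` is the elimination graph after eliminating vertices `0, …, m-1` in order. -/
def filled {N : ℕ} (A : Fin N → Fin N → Prop) : ℕ → (Fin N → Fin N → Prop)
  | 0 => A
  | m + 1 => if h : m < N then elimStep (filled A m) ⟨m, h⟩ else filled A m

/-- Rose–Tarjan fill path theorem: for `j < i`, entry `(i,j)` is a (fill) nonzero of the
Cholesky factor — i.e. `i` and `j` are adjacent in the elimination graph right before `j`
is eliminated — iff there is a path from `i` to `j` in the original graph all of whose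
intermediate vertices are smaller than `j = min(i,j)`. -/
lemma first_occ {α : Type*} [DecidableEq α] {a : α} :
    ∀ {l : List α}, a ∈ l → ∃ s t, l = s ++ a :: t ∧ a ∉ s := by
  intro l hl
  induction l with
  | nil => simp at hl
  | cons b l ih =>
    by_cases hb : a = b
    · exact ⟨[], l, by simp [hb], by simp⟩
    · rcases ih ((List.mem_cons.mp hl).resolve_left hb) with ⟨s, t, rfl, hs⟩
      exact ⟨b :: s, t, by simp, by simp [hs, hb]⟩

lemma strip {α : Type*} [DecidableEq α] (R : α → α → Prop) (P : α → Prop) (k v : α)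
    (q : List α) (hc : List.Chain R k (q ++ [v])) (hq : ∀ x ∈ q, P x ∨ x = k) :
    ∃ q', List.Chain R k (q' ++ [v]) ∧ ∀ x ∈ q', P x := by
  by_cases hk : k ∈ q
  · obtain ⟨s, t, ht⟩ := List.append_of_mem hk
    subst ht
    have hc' : List.Chain R k (t ++ [v]) := by
      have := (List.isChain_cons_split (l₁ := s) (l₂ := t ++ [v])).mp (by simpa [List.Chain] using hc)
      exact this.2
    exact strip R P k v t hc' (fun x hx => hq x (by simp [hx]))
  · exact ⟨q, hc, fun x hx => (hq x hx).resolve_right (fun h => hk (h ▸ hx))⟩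
termination_by q.length
decreasing_by subst ht; simp only [List.length_append, List.length_cons]; omega

lemma filled_iff {N : ℕ} (A : Fin N → Fin N → Prop) (hirr : ∀ u, ¬ A u u) :
    ∀ (m : ℕ) (u v : Fin N),
      filled A m u v ↔
        u ≠ v ∧ m ≤ u.val ∧ m ≤ v.val ∧
          ∃ p : List (Fin N), List.Chain A u (p ++ [v]) ∧ ∀ x ∈ p, x.val < m := by
  intro m
  induction m with
  | zero =>
    intro u v
    simp only [filled, Nat.zero_le, true_and]
    constructor
    · intro h
      refine ⟨fun he => hirr u (he ▸ h), [], by simpa [List.Chain] using h, by simp⟩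
    · rintro ⟨-, p, hc, hp⟩
      have : p = [] := List.eq_nil_iff_forall_not_mem.mpr (fun x hx => by simpa using hp x hx)
      subst this
      simpa [List.Chain] using hc
  | succ m ih =>
    intro u v
    show (if h : m < N then elimStep (filled A m) ⟨m, h⟩ else filled A m) u v ↔ _
    split_ifs with h
    · set k : Fin N := ⟨m, h⟩ with hk
      have hkv : k.val = m := by rw [hk]
      constructor
      · rintro ⟨huk, hvk, hor⟩
        have hukv : u.val ≠ m := fun he => huk (Fin.ext he)
        have hvkv : v.val ≠ m := fun he => hvk (Fin.ext he)
        rcases hor with hA | ⟨hne, h1, h2⟩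
        · rcases (ih u v).mp hA with ⟨hne, hu, hv, p, hc, hp⟩
          exact ⟨hne, by omega, by omega, p, hc, fun x hx => Nat.lt_succ_of_lt (hp x hx)⟩
        · rcases (ih u k).mp h1 with ⟨-, hu, -, p1, hc1, hp1⟩
          rcases (ih k v).mp h2 with ⟨-, -, hv, p2, hc2, hp2⟩
          refine ⟨hne, by omega, by omega, p1 ++ k :: p2, ?_, ?_⟩
          · have : (p1 ++ k :: p2) ++ [v] = p1 ++ k :: (p2 ++ [v]) := by simp
            rw [this]
            exact (List.isChain_cons_split).mpr ⟨hc1, hc2⟩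
          · intro x hx
            rcases List.mem_append.mp hx with hx | hx
            · exact Nat.lt_succ_of_lt (hp1 x hx)
            · rcases List.mem_cons.mp hx with rfl | hx
              · exact Nat.lt_succ_self m
              · exact Nat.lt_succ_of_lt (hp2 x hx)
      · rintro ⟨hne, hu, hv, p, hc, hp⟩
        have huk : u ≠ k := by
          intro he
          have : u.val = m := by rw [he, hk]
          omega
        have hvk : v ≠ k := by
          intro he
          have : v.val = m := by rw [he, hk]
          omega
        refine ⟨huk, hvk, ?_⟩
        by_cases hkp : k ∈ p
        · obtain ⟨p1, p2, rfl, hknp1⟩ := first_occ hkp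
          have hsplit := (List.isChain_cons_split (l₁ := p1) (l₂ := p2 ++ [v])).mp (by simpa [List.Chain] using hc)
          obtain ⟨q', hcq, hq⟩ := strip A (fun x => x.val < m) k v p2 hsplit.2
            (fun x hx => by
              have := hp x (by simp [hx])
              by_cases hxm : x.val < m
              · exact Or.inl hxm
              · exact Or.inr (Fin.ext (by omega)))
          refine Or.inr ⟨hne, ?_, ?_⟩
          · exact (ih u k).mpr ⟨huk, by omega, le_refl m, p1, hsplit.1,
              fun x hx => by
                have h1 := hp x (by simp [hx])
                have h2 : x ≠ k := fun he => hknp1 (he ▸ hx)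
                have : x.val ≠ m := fun he => h2 (Fin.ext he)
                omega⟩
          · exact (ih k v).mpr ⟨hvk.symm, le_refl m, by omega, q', hcq, hq⟩
        · apply Or.inl
          exact (ih u v).mpr ⟨hne, by omega, by omega, p, hc,
            fun x hx => by
              have h1 := hp x hx
              have h2 : x ≠ k := fun he => hkp (he ▸ hx)
              have : x.val ≠ m := fun he => h2 (Fin.ext he)
              omega⟩
    · constructor
      · intro hA
        rcases (ih u v).mp hA with ⟨-, hu, -, -⟩
        exact absurd (lt_of_le_of_lt hu u.isLt) h
      · rintro ⟨-, hu, -, -⟩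
        have := u.isLt
        omega

theorem stmt_13 {N : ℕ} (A : Fin N → Fin N → Prop)
    (hsymm : ∀ u v, A u v → A v u) (hirr : ∀ u, ¬ A u u)
    (i j : Fin N) (hji : j < i) :
    filled A j.val i j ↔
      ∃ p : List (Fin N), List.Chain A i (p ++ [j]) ∧ ∀ v ∈ p, v < j := by
  rw [filled_iff A hirr]
  constructor
  · rintro ⟨-, -, -, p, hc, hp⟩
    exact ⟨p, hc, fun x hx => hp x hx⟩
  · rintro ⟨p, hc, hp⟩
    exact ⟨Fin.ne_of_gt hji, Nat.le_of_lt hji, le_refl _, p, hc, fun x hx => hp x hx⟩
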